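/- Let J(t,x,y) := (4πt)^{−1/2}[exp(−(x−y)²/(4t)) − exp(−(x+y)²/(4t))] and K(t,x,y) := (y/x)·∂J/∂y(t,x,y) for x > 0. Then there exists a constant C > 0 such that for every t > 0, x ∈ (0,1], y ∈ [0,1] with y ≥ 2x, |K(t,x,y)| ≤ e^{−y²/(16t)}·(C·y/t^{3/2} + C·y³/t^{5/2}). -/

import Mathlib

noncomputable def dJdy (t x y : ℝ) : ℝ :=
  (Real.sqrt (4 * Real.pi * t))⁻¹ * (1 / (2 * t)) *
    ((x - y) * Real.exp (-(x - y) ^ 2 / (4 * t)) +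
      (x + y) * Real.exp (-(x + y) ^ 2 / (4 * t)))

set_option maxHeartbeats 1600000 in
theorem stmt11 : ∃ C > 0, ∀ t > 0, ∀ x ∈ Set.Ioc (0:ℝ) 1,
    ∀ y ∈ Set.Icc (0:ℝ) 1, 2 * x ≤ y →
    |(y / x) * dJdy t x y| ≤
      Real.exp (-y ^ 2 / (16 * t)) *
        (C * y / (t * Real.sqrt t) + C * y ^ 3 / (t ^ 2 * Real.sqrt t)) := by
  refine ⟨1, one_pos, ?_⟩
  intro t ht x hx y hy hxy
  obtain ⟨hx0, hx1⟩ := hx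
  obtain ⟨hy0, hy1⟩ := hy
  have hst : 0 < Real.sqrt t := Real.sqrt_pos.mpr ht
  have hti : 0 < t⁻¹ := inv_pos.mpr ht
  simp only [dJdy]
  set A := Real.exp (-(x - y) ^ 2 / (4 * t)) with hA
  set B := Real.exp (-(x + y) ^ 2 / (4 * t)) with hB
  set E := Real.exp (-y ^ 2 / (16 * t)) with hE
  set s := Real.sqrt (4 * Real.pi * t) with hsdef
  have hApos : 0 < A := Real.exp_pos _
  have hBpos : 0 < B := Real.exp_pos _
  have hEpos : 0 < E := Real.exp_pos _
  have hspos : 0 < s := Real.sqrt_pos.mpr (by positivity)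
  have hAE : A ≤ E := by
    apply Real.exp_le_exp.mpr
    rw [div_le_div_iff₀ (by positivity) (by positivity)]
    have hq : 0 ≤ (y - 2 * x) * (3 * y - 2 * x) :=
      mul_nonneg (by linarith) (by linarith)
    nlinarith [mul_nonneg ht.le hq]
  have hBE : B ≤ E := by
    apply Real.exp_le_exp.mpr
    rw [div_le_div_iff₀ (by positivity) (by positivity)]
    nlinarith [mul_nonneg ht.le (mul_nonneg hx0.le hy0),
      mul_nonneg ht.le (sq_nonneg x), mul_nonneg ht.le (sq_nonneg y)]
  have hBA : B = A * Real.exp (-(x * y) / t) := by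
    rw [hA, hB, ← Real.exp_add]
    congr 1
    field_simp
    ring
  have hexp1 : Real.exp (-(x * y) / t) ≤ 1 := by
    rw [Real.exp_le_one_iff]
    apply div_nonpos_of_nonpos_of_nonneg (by nlinarith) ht.le
  have hBAle : B ≤ A := by
    rw [hBA]; nlinarith
  have hABle : A - B ≤ A * (x * y / t) := by
    have h1 : 1 - Real.exp (-(x * y) / t) ≤ x * y / t := by
      have := Real.add_one_le_exp (-(x * y) / t)
      have hdiv : -(x * y) / t = -(x * y / t) := by ring
      linarith [hdiv ▸ this]
    calc A - B = A * (1 - Real.exp (-(x * y) / t)) := by rw [hBA]; ring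
    _ ≤ A * (x * y / t) := by nlinarith
  have hs2 : 2 * Real.sqrt t ≤ s := by
    have h4 : Real.sqrt 4 = 2 := by
      rw [show (4:ℝ) = 2 ^ 2 by norm_num, Real.sqrt_sq (by norm_num : (0:ℝ) ≤ 2)]
    have : Real.sqrt (4 * Real.pi * t) = Real.sqrt (4 * Real.pi) * Real.sqrt t := by
      rw [Real.sqrt_mul (by positivity)]
    rw [hsdef, this]
    have h2 : (2:ℝ) ≤ Real.sqrt (4 * Real.pi) := by
      rw [← h4]
      exact Real.sqrt_le_sqrt (by nlinarith [Real.pi_gt_three])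
    nlinarith
  clear_value A B E s
  have habsF : |(x - y) * A + (x + y) * B| ≤ x * (A + B) + A * x * y ^ 2 / t := by
    have hy2 : y * (A - B) ≤ y * (A * (x * y / t)) :=
      mul_le_mul_of_nonneg_left hABle hy0
    have hnn : 0 ≤ A * x * y ^ 2 / t := by positivity
    have hxA : 0 ≤ x * A := mul_nonneg hx0.le hApos.le
    have hxB : 0 ≤ x * B := mul_nonneg hx0.le hBpos.le
    have hyAB : 0 ≤ y * (A - B) := mul_nonneg hy0 (sub_nonneg.mpr hBAle)
    have hrg : y * (A * (x * y / t)) = A * x * y ^ 2 / t := by ring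
    rw [abs_le]
    constructor
    · linarith [hy2, hrg]
    · linarith [hy2, hrg]
  have habs0 : |y / x * (s⁻¹ * (1 / (2 * t)) * ((x - y) * A + (x + y) * B))| =
      y / x * (s⁻¹ * (1 / (2 * t))) * |(x - y) * A + (x + y) * B| := by
    rw [abs_mul, abs_mul, abs_of_nonneg (div_nonneg hy0 hx0.le),
      abs_of_nonneg (by positivity : (0:ℝ) ≤ s⁻¹ * (1 / (2 * t)))]
    ring
  rw [habs0]
  calc y / x * (s⁻¹ * (1 / (2 * t))) * |(x - y) * A + (x + y) * B|
      ≤ y / x * (s⁻¹ * (1 / (2 * t))) * (x * (A + B) + A * x * y ^ 2 / t) := by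
        apply mul_le_mul_of_nonneg_left habsF (by positivity)
    _ = s⁻¹ * (1 / (2 * t)) * (y * (A + B) + A * y ^ 3 / t) := by
        field_simp
    _ ≤ (2 * Real.sqrt t)⁻¹ * (1 / (2 * t)) * (2 * E * y + E * y ^ 3 / t) := by
        have hinv : s⁻¹ ≤ (2 * Real.sqrt t)⁻¹ :=
          inv_anti₀ (by positivity) hs2
        have hM : y * (A + B) + A * y ^ 3 / t ≤ 2 * E * y + E * y ^ 3 / t := by
          have h2 : A * y ^ 3 / t ≤ E * y ^ 3 / t :=
            (div_le_div_iff_of_pos_right ht).mpr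
              (mul_le_mul_of_nonneg_right hAE (pow_nonneg hy0 3))
          linarith [mul_nonneg hy0 (sub_nonneg.mpr hAE),
            mul_nonneg hy0 (sub_nonneg.mpr hBE), h2]
        have hMpos : 0 ≤ y * (A + B) + A * y ^ 3 / t := by positivity
        have hc : 0 < 1 / (2 * t) := by positivity
        exact mul_le_mul (mul_le_mul_of_nonneg_right hinv hc.le) hM hMpos
          (by positivity)
    _ ≤ E * (1 * y / (t * Real.sqrt t) + 1 * y ^ 3 / (t ^ 2 * Real.sqrt t)) := by
        have heq : (2 * Real.sqrt t)⁻¹ * (1 / (2 * t)) * (2 * E * y + E * y ^ 3 / t) =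
            (1 / 2) * (E * y / (t * Real.sqrt t)) + (1 / 4) * (E * y ^ 3 / (t ^ 2 * Real.sqrt t)) := by
          field_simp
          ring
        rw [heq]
        have h1 : 0 ≤ E * y / (t * Real.sqrt t) := by positivity
        have h2 : 0 ≤ E * y ^ 3 / (t ^ 2 * Real.sqrt t) := by positivity
        have h3 : E * (1 * y / (t * Real.sqrt t) + 1 * y ^ 3 / (t ^ 2 * Real.sqrt t)) =
            E * y / (t * Real.sqrt t) + E * y ^ 3 / (t ^ 2 * Real.sqrt t) := by ring
        rw [h3]
        linarith
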